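/- Let G be a connected graph with a distinguished source vertex s, and define h⁰_v = (if v = s then 1 else 0, if v = s then ℓ else 0) for a fixed real label ℓ ≥ 1, and iteratively h^{k+1}_v[1] = max over u ∈ N(v) ∪ {v} of h^k_u[1] and h^{k+1}_v[2] = max over u ∈ N(v) ∪ {v} of h^k_u[1]·h^k_u[2]. Then for all k and all vertices v: if dist(v, s) ≤ k then h^k_v = (1, ℓ), and if dist(v, s) > k then h^k_v[1] = 0. -/

import Mathlib

/-- Max-based message passing propagates the source label: if `dist(v,s) ≤ k`
then `h^k_v = (1, ℓ)`, and if `dist(v,s) > k` then `h^k_v[1] = 0`. -/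
theorem max_propagation {V : Type*} [Fintype V] [DecidableEq V]
    (G : SimpleGraph V) [DecidableRel G.Adj] (hconn : G.Connected)
    (s : V) (ℓ : ℝ) (hℓ : 1 ≤ ℓ) (h : ℕ → V → ℝ × ℝ)
    (h0 : ∀ v, h 0 v = (if v = s then 1 else 0, if v = s then ℓ else 0))
    (hstep1 : ∀ k v, (h (k + 1) v).1 =
      (insert v (G.neighborFinset v)).sup' (Finset.insert_nonempty v _)
        (fun u => (h k u).1))
    (hstep2 : ∀ k v, (h (k + 1) v).2 =
      (insert v (G.neighborFinset v)).sup' (Finset.insert_nonempty v _)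
        (fun u => (h k u).1 * (h k u).2)) :
    ∀ k v, (G.dist v s ≤ k → h k v = (1, ℓ)) ∧ (k < G.dist v s → (h k v).1 = 0) := by
  have hℓ0 : (0:ℝ) ≤ ℓ := le_trans zero_le_one hℓ
  intro k
  induction k with
  | zero =>
    intro v
    constructor
    · intro hd
      have hvs : v = s := by
        have hr : G.Reachable v s := hconn v s
        have := Nat.le_zero.mp hd
        exact (SimpleGraph.Reachable.dist_eq_zero_iff hr).mp this
      simp [h0, hvs]
    · intro hd
      have hvs : v ≠ s := by
        intro hvs; subst hvs; simp [SimpleGraph.dist_self] at hd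
      simp [h0, hvs]
  | succ k ih =>
    intro v
    -- bounds from IH: each coordinate value is ≤ 1, each product ≤ ℓ
    have hb1 : ∀ u, (h k u).1 ≤ 1 := by
      intro u
      rcases le_or_gt (G.dist u s) k with hu | hu
      · rw [(ih u).1 hu]
      · rw [(ih u).2 hu]; exact zero_le_one
    have hb2 : ∀ u, (h k u).1 * (h k u).2 ≤ ℓ := by
      intro u
      rcases le_or_gt (G.dist u s) k with hu | hu
      · rw [(ih u).1 hu]; simp [hℓ]
      · rw [(ih u).2 hu]; simpa using hℓ0
    constructor
    · intro hd
      -- find u in insert v (neighborFinset v) with dist u s ≤ k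
      obtain ⟨u, hu, hus⟩ : ∃ u ∈ insert v (G.neighborFinset v), G.dist u s ≤ k := by
        rcases le_or_gt (G.dist v s) k with hv | hv
        · exact ⟨v, Finset.mem_insert_self _ _, hv⟩
        · obtain ⟨p, hp⟩ := (hconn v s).exists_walk_length_eq_dist
          cases p with
          | nil => simp [SimpleGraph.dist_self] at hv
          | @cons _ w _ hadj q =>
            refine ⟨w, Finset.mem_insert_of_mem
              ((SimpleGraph.mem_neighborFinset _ _ _).mpr hadj), ?_⟩
            have hq : G.dist w s ≤ q.length := SimpleGraph.dist_le q
            simp only [SimpleGraph.Walk.length_cons] at hp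
            omega
      have huv : h k u = (1, ℓ) := (ih u).1 hus
      have e1 : (h (k+1) v).1 = 1 := by
        rw [hstep1]
        apply le_antisymm
        · exact Finset.sup'_le _ _ fun b _ => hb1 b
        · have := Finset.le_sup' (fun u => (h k u).1) hu
          rw [huv] at this
          exact this
      have e2 : (h (k+1) v).2 = ℓ := by
        rw [hstep2]
        apply le_antisymm
        · exact Finset.sup'_le _ _ fun b _ => hb2 b
        · have := Finset.le_sup' (fun u => (h k u).1 * (h k u).2) hu
          rw [huv] at this
          simpa only [one_mul] using this
      exact Prod.ext e1 e2
    · intro hd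
      rw [hstep1]
      have hall : ∀ u ∈ insert v (G.neighborFinset v), (h k u).1 = 0 := by
        intro u hu
        apply (ih u).2
        rcases Finset.mem_insert.mp hu with rfl | hu'
        · omega
        · have hadj : G.Adj v u := (SimpleGraph.mem_neighborFinset _ _ _).mp hu'
          have ht : G.dist v s ≤ G.dist v u + G.dist u s :=
            SimpleGraph.Connected.dist_triangle hconn
          have h1 : G.dist v u = 1 := (SimpleGraph.dist_eq_one_iff_adj).mpr hadj
          omega
      apply le_antisymm
      · exact Finset.sup'_le _ _ fun b hb => le_of_eq (hall b hb)
      · have := Finset.le_sup' (fun u => (h k u).1)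
          (Finset.mem_insert_self v (G.neighborFinset v))
        rw [hall v (Finset.mem_insert_self v _)] at this
        exact this
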